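/- In the nil affine Hecke algebra H_n, for each 1 ≤ i ≤ n: x_i · Δ_n = Δ_n · x_i, where Δ_n is the image of Σ_{r=1}^n τ_r⋯τ_{n−1} ⊗ τ_1⋯τ_{r−1} in H_n ι_0 ⊗_{H_{n−1}[y]} ι_1 H_n, the left action being left multiplication on the first factor and the right action right multiplication on the second factor. -/

import Mathlib

open scoped TensorProduct

namespace NilHecke

variable (k : Type) [Field k]

/-- Relations of the nil affine Hecke algebra `H n` (0-based indices: generators
`x_0,…,x_{n-1}` and `τ_0,…,τ_{n-2}`; out-of-range generators are killed). -/
inductive Rel (n : ℕ) : FreeAlgebra k (ℕ ⊕ ℕ) → FreeAlgebra k (ℕ ⊕ ℕ) → Prop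
  | xkill (i : ℕ) (h : n ≤ i) : Rel n (FreeAlgebra.ι k (.inl i)) 0
  | tkill (i : ℕ) (h : n ≤ i + 1) : Rel n (FreeAlgebra.ι k (.inr i)) 0
  | tsq (i : ℕ) : Rel n (FreeAlgebra.ι k (.inr i) * FreeAlgebra.ι k (.inr i)) 0
  | braid (i : ℕ) :
      Rel n (FreeAlgebra.ι k (.inr i) * FreeAlgebra.ι k (.inr (i+1)) * FreeAlgebra.ι k (.inr i))
        (FreeAlgebra.ι k (.inr (i+1)) * FreeAlgebra.ι k (.inr i) * FreeAlgebra.ι k (.inr (i+1)))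
  | tcomm (i j : ℕ) (h : i + 1 < j) :
      Rel n (FreeAlgebra.ι k (.inr i) * FreeAlgebra.ι k (.inr j))
        (FreeAlgebra.ι k (.inr j) * FreeAlgebra.ι k (.inr i))
  | xcomm (i j : ℕ) :
      Rel n (FreeAlgebra.ι k (.inl i) * FreeAlgebra.ι k (.inl j))
        (FreeAlgebra.ι k (.inl j) * FreeAlgebra.ι k (.inl i))
  | txcomm (i j : ℕ) (h1 : j ≠ i) (h2 : j ≠ i + 1) :
      Rel n (FreeAlgebra.ι k (.inr i) * FreeAlgebra.ι k (.inl j))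
        (FreeAlgebra.ι k (.inl j) * FreeAlgebra.ι k (.inr i))
  | tx (i : ℕ) (h : i + 1 < n) :
      Rel n (FreeAlgebra.ι k (.inr i) * FreeAlgebra.ι k (.inl i)
          - FreeAlgebra.ι k (.inl (i+1)) * FreeAlgebra.ι k (.inr i)) 1
  | xt (i : ℕ) (h : i + 1 < n) :
      Rel n (FreeAlgebra.ι k (.inl i) * FreeAlgebra.ι k (.inr i)
          - FreeAlgebra.ι k (.inr i) * FreeAlgebra.ι k (.inl (i+1))) 1

/-- The nil affine Hecke algebra on `n` strands over `k`. -/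
def H (n : ℕ) : Type := RingQuot (Rel k n)

instance (n : ℕ) : Ring (H k n) := inferInstanceAs (Ring (RingQuot (Rel k n)))

instance (n : ℕ) : Algebra k (H k n) := inferInstanceAs (Algebra k (RingQuot (Rel k n)))

/-- The polynomial generator `x_{i+1}` (0-based `x_i`). -/
def X (n i : ℕ) : H k n := RingQuot.mkAlgHom k (Rel k n) (FreeAlgebra.ι k (.inl i))

/-- The nil Hecke generator `τ_{i+1}` (0-based `τ_i`). -/
def T (n i : ℕ) : H k n := RingQuot.mkAlgHom k (Rel k n) (FreeAlgebra.ι k (.inr i))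

/-- The element `s_i = τ_i (x_i - x_{i+1}) - 1`. -/
def s (n i : ℕ) : H k n := T k n i * (X k n i - X k n (i+1)) - 1

/-- The ascending product `τ_a τ_{a+1} ⋯ τ_{b-1}` (0-based). -/
def chain (n a b : ℕ) : H k n := (List.map (T k n) (List.range' a (b - a))).prod

theorem X_kill (n i : ℕ) (h : n ≤ i) : X k n i = 0 := by
  have h := RingQuot.mkAlgHom_rel k (Rel.xkill (k := k) (n := n) i h)
  simp only [map_mul, map_sub, map_one, map_zero] at h
  exact h

theorem T_kill (n i : ℕ) (h : n ≤ i + 1) : T k n i = 0 := by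
  have h := RingQuot.mkAlgHom_rel k (Rel.tkill (k := k) (n := n) i h)
  simp only [map_mul, map_sub, map_one, map_zero] at h
  exact h

theorem T_sq (n i : ℕ) : T k n i * T k n i = 0 := by
  have h := RingQuot.mkAlgHom_rel k (Rel.tsq (k := k) (n := n) i)
  simp only [map_mul, map_sub, map_one, map_zero] at h
  exact h

theorem T_braid (n i : ℕ) :
    T k n i * T k n (i+1) * T k n i = T k n (i+1) * T k n i * T k n (i+1) := by
  have h := RingQuot.mkAlgHom_rel k (Rel.braid (k := k) (n := n) i)
  simp only [map_mul, map_sub, map_one, map_zero] at h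
  exact h

theorem T_comm (n i j : ℕ) (h : i + 1 < j) : T k n i * T k n j = T k n j * T k n i := by
  have h := RingQuot.mkAlgHom_rel k (Rel.tcomm (k := k) (n := n) i j h)
  simp only [map_mul, map_sub, map_one, map_zero] at h
  exact h

theorem X_comm (n i j : ℕ) : X k n i * X k n j = X k n j * X k n i := by
  have h := RingQuot.mkAlgHom_rel k (Rel.xcomm (k := k) (n := n) i j)
  simp only [map_mul, map_sub, map_one, map_zero] at h
  exact h

theorem TX_comm (n i j : ℕ) (h1 : j ≠ i) (h2 : j ≠ i + 1) :
    T k n i * X k n j = X k n j * T k n i := by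
  have h := RingQuot.mkAlgHom_rel k (Rel.txcomm (k := k) (n := n) i j h1 h2)
  simp only [map_mul, map_sub, map_one, map_zero] at h
  exact h

theorem TX (n i : ℕ) (h : i + 1 < n) :
    T k n i * X k n i - X k n (i+1) * T k n i = 1 := by
  have h := RingQuot.mkAlgHom_rel k (Rel.tx (k := k) (n := n) i h)
  simp only [map_mul, map_sub, map_one, map_zero] at h
  exact h

theorem XT (n i : ℕ) (h : i + 1 < n) :
    X k n i * T k n i - T k n i * X k n (i+1) = 1 := by
  have h := RingQuot.mkAlgHom_rel k (Rel.xt (k := k) (n := n) i h)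
  simp only [map_mul, map_sub, map_one, map_zero] at h
  exact h

/-- The inclusion `H m → H n` for `m ≤ n`. -/
def incl (m n : ℕ) (h : m ≤ n) : H k m →ₐ[k] H k n :=
  RingQuot.liftAlgHom k ⟨FreeAlgebra.lift k (fun g =>
    match g with
    | .inl i => if i < m then X k n i else 0
    | .inr i => if i + 1 < m then T k n i else 0), by
      rintro a b r
      induction r with
      | xkill i h' => simp only [FreeAlgebra.lift_ι_apply, map_zero]; rw [if_neg (by omega)]
      | tkill i h' => simp only [FreeAlgebra.lift_ι_apply, map_zero]; rw [if_neg (by omega)]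
      | tsq i =>
          simp only [map_mul, FreeAlgebra.lift_ι_apply, map_zero]
          split_ifs <;> simp [T_sq]
      | braid i =>
          simp only [map_mul, FreeAlgebra.lift_ι_apply]
          split_ifs <;> simp [T_braid]
      | tcomm i j h' =>
          simp only [map_mul, FreeAlgebra.lift_ι_apply]
          split_ifs <;> simp [T_comm k n i j h']
      | xcomm i j =>
          simp only [map_mul, FreeAlgebra.lift_ι_apply]
          split_ifs <;> simp [X_comm k n i j]
      | txcomm i j h1 h2 =>
          simp only [map_mul, FreeAlgebra.lift_ι_apply]
          split_ifs <;> simp [TX_comm k n i j h1 h2]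
      | tx i h' =>
          simp only [map_sub, map_mul, map_one, FreeAlgebra.lift_ι_apply]
          rw [if_pos h', if_pos (by omega : i < m), if_pos (by omega : i + 1 < m)]
          exact TX k n i (by omega)
      | xt i h' =>
          simp only [map_sub, map_mul, map_one, FreeAlgebra.lift_ι_apply]
          rw [if_pos (by omega : i < m), if_pos h', if_pos h']
          exact XT k n i (by omega)⟩

/-- The shift embedding `H m → H n` (sending `x_i ↦ x_{i+1}`, `τ_i ↦ τ_{i+1}`). -/
def shj (m n : ℕ) (h : m + 1 ≤ n ∨ m = 0) : H k m →ₐ[k] H k n :=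
  RingQuot.liftAlgHom k ⟨FreeAlgebra.lift k (fun g =>
    match g with
    | .inl i => if i < m then X k n (i+1) else 0
    | .inr i => if i + 1 < m then T k n (i+1) else 0), by
      rintro a b r
      induction r with
      | xkill i h' => simp only [FreeAlgebra.lift_ι_apply, map_zero]; rw [if_neg (by omega)]
      | tkill i h' => simp only [FreeAlgebra.lift_ι_apply, map_zero]; rw [if_neg (by omega)]
      | tsq i =>
          simp only [map_mul, FreeAlgebra.lift_ι_apply, map_zero]
          split_ifs <;> simp [T_sq]
      | braid i =>
          simp only [map_mul, FreeAlgebra.lift_ι_apply]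
          split_ifs <;> simp [T_braid]
      | tcomm i j h' =>
          simp only [map_mul, FreeAlgebra.lift_ι_apply]
          split_ifs <;> simp [T_comm k n (i+1) (j+1) (by omega)]
      | xcomm i j =>
          simp only [map_mul, FreeAlgebra.lift_ι_apply]
          split_ifs <;> simp [X_comm k n (i+1) (j+1)]
      | txcomm i j h1 h2 =>
          simp only [map_mul, FreeAlgebra.lift_ι_apply]
          split_ifs <;> simp [TX_comm k n (i+1) (j+1) (by omega) (by omega)]
      | tx i h' =>
          simp only [map_sub, map_mul, map_one, FreeAlgebra.lift_ι_apply]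
          rw [if_pos h', if_pos (by omega : i < m), if_pos (by omega : i + 1 < m)]
          exact TX k n (i+1) (by omega)
      | xt i h' =>
          simp only [map_sub, map_mul, map_one, FreeAlgebra.lift_ι_apply]
          rw [if_pos (by omega : i < m), if_pos h', if_pos h']
          exact XT k n (i+1) (by omega)⟩

end NilHecke

namespace NilHecke

variable (k : Type) [Field k]

/-- `ι_0 : H_{n−1}[y] → H_n`, sending `x_i ↦ x_i`, `τ_i ↦ τ_i`, `y ↦ x_n`
(0-based: `y ↦ x_{n-1}`, the last variable). -/
def iota0 (n : ℕ) (p : Polynomial (H k (n-1))) : H k n :=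
  p.sum fun i a => incl k (n-1) n (Nat.sub_le n 1) a * X k n (n-1) ^ i

/-- `ι_1 : H_{n−1}[y] → H_n`, sending `x_i ↦ x_{i+1}`, `τ_i ↦ τ_{i+1}`, `y ↦ x_1`
(0-based: `y ↦ x_0`, the first variable). -/
def iota1 (n : ℕ) (p : Polynomial (H k (n-1))) : H k n :=
  p.sum fun i a => shj k (n-1) n (by omega) a * X k n 0 ^ i

/-- The balancing submodule of `H_n ⊗_k H_n` whose quotient is the balanced tensor
product `H_n ι_0 ⊗_{H_{n−1}[y]} ι_1 H_n`. -/
noncomputable def bal (n : ℕ) : Submodule k (H k n ⊗[k] H k n) :=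
  Submodule.span k {z | ∃ (a b : H k n) (p : Polynomial (H k (n-1))),
    z = (a * iota0 k n p) ⊗ₜ[k] b - a ⊗ₜ[k] (iota1 k n p * b)}

/-- A representative in `H_n ⊗_k H_n` of the element
`Δ_n = Σ_{r=1}^{n} (τ_r ⋯ τ_{n−1}) ⊗ (τ_1 ⋯ τ_{r−1})` (1-based indices). -/
noncomputable def deltaT (n : ℕ) : H k n ⊗[k] H k n :=
  ∑ r ∈ Finset.range n, chain k n r (n-1) ⊗ₜ[k] chain k n 0 r

/-- A representative of `p · Δ_n` for `p ∈ H_n[y]` acting through the left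
`H_n[y]`-module structure of `H_n ι_0 ⊗_{H_{n−1}[y]} ι_1 H_n` (on the left factor,
`y` acting via `x_n`, i.e. a coefficient `c·y^i` sends `m ⊗ h` to `c·m·x_n^i ⊗ h`). -/
noncomputable def actDelta (n : ℕ) (p : Polynomial (H k n)) : H k n ⊗[k] H k n :=
  ∑ r ∈ Finset.range n,
    (p.sum fun i c => c * chain k n r (n-1) * X k n (n-1) ^ i) ⊗ₜ[k] chain k n 0 r

end NilHecke

namespace NilHecke

section Aux

variable (k : Type) [Field k]

theorem chain_stop (n a b : ℕ) (h : b ≤ a) : chain k n a b = 1 := by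
  simp [chain, Nat.sub_eq_zero_of_le h]

theorem chain_cons (n a b : ℕ) (h : a < b) :
    chain k n a b = T k n a * chain k n (a + 1) b := by
  have hd : b - a = (b - (a + 1)) + 1 := by omega
  rw [chain, chain, hd, List.range'_succ]
  simp

theorem chain_split (n a b c : ℕ) (h1 : a ≤ b) (h2 : b ≤ c) :
    chain k n a c = chain k n a b * chain k n b c := by
  have h3 : c - a = (b - a) + (c - b) := by omega
  have h4 : a + 1 * (b - a) = b := by omega
  rw [chain, chain, chain, h3, ← List.range'_append, h4, List.map_append, List.prod_append]

theorem chain_single (n a : ℕ) : chain k n a (a + 1) = T k n a := by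
  simp [chain]

theorem chain_snoc (n a b : ℕ) (h : a ≤ b) :
    chain k n a (b + 1) = chain k n a b * T k n b := by
  rw [chain_split k n a b (b + 1) h (by omega), chain_single]

theorem comm_chain (n a b : ℕ) (c : H k n)
    (h : ∀ j, a ≤ j → j < b → c * T k n j = T k n j * c) :
    c * chain k n a b = chain k n a b * c := by
  obtain ⟨d, hd⟩ : ∃ d, b - a = d := ⟨_, rfl⟩
  induction d generalizing a with
  | zero =>
      rw [chain_stop k n a b (by omega)]; rw [mul_one, one_mul]
  | succ d ih =>
      have hab : a < b := by omega
      rw [chain_cons k n a b hab, ← mul_assoc, h a le_rfl hab, mul_assoc,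
        ih (a + 1) (fun j h1 h2 => h j (by omega) h2) (by omega), mul_assoc]

theorem chain_chain_comm (n a b c d : ℕ) (h : b < c) :
    chain k n a b * chain k n c d = chain k n c d * chain k n a b := by
  refine comm_chain k n c d (chain k n a b) fun l h1 h2 => ?_
  refine (comm_chain k n a b (T k n l) fun j h3 h4 => ?_).symm
  exact (T_comm k n j l (by omega)).symm

theorem X_comm_chain (n p a b : ℕ) (h : ∀ j, a ≤ j → j < b → p ≠ j ∧ p ≠ j + 1) :
    X k n p * chain k n a b = chain k n a b * X k n p := by
  refine comm_chain k n a b (X k n p) fun j h1 h2 => ?_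
  exact ((TX_comm k n j p (h j h1 h2).1 (h j h1 h2).2)).symm

theorem incl_X (m n j : ℕ) (h : m ≤ n) (hj : j < m) :
    incl k m n h (X k m j) = X k n j := by
  rw [incl, X]
  erw [RingQuot.liftAlgHom_mkAlgHom_apply, FreeAlgebra.lift_ι_apply]
  exact if_pos hj

theorem incl_T (m n j : ℕ) (h : m ≤ n) (hj : j + 1 < m) :
    incl k m n h (T k m j) = T k n j := by
  rw [incl, T]
  erw [RingQuot.liftAlgHom_mkAlgHom_apply, FreeAlgebra.lift_ι_apply]
  exact if_pos hj

theorem shj_X (m n j : ℕ) (h : m + 1 ≤ n ∨ m = 0) (hj : j < m) :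
    shj k m n h (X k m j) = X k n (j + 1) := by
  rw [shj, X]
  erw [RingQuot.liftAlgHom_mkAlgHom_apply, FreeAlgebra.lift_ι_apply]
  exact if_pos hj

theorem shj_T (m n j : ℕ) (h : m + 1 ≤ n ∨ m = 0) (hj : j + 1 < m) :
    shj k m n h (T k m j) = T k n (j + 1) := by
  rw [shj, T]
  erw [RingQuot.liftAlgHom_mkAlgHom_apply, FreeAlgebra.lift_ι_apply]
  exact if_pos hj

theorem iota0_C (n : ℕ) (c : H k (n - 1)) :
    iota0 k n (Polynomial.C c) = incl k (n - 1) n (Nat.sub_le n 1) c := by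
  rw [iota0, Polynomial.sum_C_index (by simp)]
  simp

theorem iota1_C (n : ℕ) (c : H k (n - 1)) :
    iota1 k n (Polynomial.C c) = shj k (n - 1) n (by omega) c := by
  rw [iota1, Polynomial.sum_C_index (by simp)]
  simp

theorem iota0_X (n : ℕ) :
    iota0 k n (Polynomial.X) = X k n (n - 1) := by
  rw [iota0, Polynomial.sum_X_index (by simp)]
  simp

theorem iota1_X (n : ℕ) :
    iota1 k n (Polynomial.X) = X k n 0 := by
  rw [iota1, Polynomial.sum_X_index (by simp)]
  simp

theorem bal_gen (n : ℕ) (a b : H k n) (p : Polynomial (H k (n - 1))) :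
    (a * iota0 k n p) ⊗ₜ[k] b - a ⊗ₜ[k] (iota1 k n p * b) ∈ bal k n :=
  Submodule.subset_span ⟨a, b, p, rfl⟩

theorem bal_X (n j : ℕ) (hj : j + 1 < n) (a b : H k n) :
    (a * X k n j) ⊗ₜ[k] b - a ⊗ₜ[k] (X k n (j + 1) * b) ∈ bal k n := by
  have hmem := bal_gen k n a b (Polynomial.C (X k (n - 1) j))
  rwa [iota0_C, iota1_C, incl_X k (n - 1) n j (Nat.sub_le n 1) (by omega),
    shj_X k (n - 1) n j (by omega) (by omega)] at hmem

theorem bal_Xlast (n : ℕ) (a b : H k n) :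
    (a * X k n (n - 1)) ⊗ₜ[k] b - a ⊗ₜ[k] (X k n 0 * b) ∈ bal k n := by
  have hmem := bal_gen k n a b (Polynomial.X)
  rwa [iota0_X, iota1_X] at hmem

theorem bal_T (n j : ℕ) (hj : j + 2 < n) (a b : H k n) :
    (a * T k n j) ⊗ₜ[k] b - a ⊗ₜ[k] (T k n (j + 1) * b) ∈ bal k n := by
  have hmem := bal_gen k n a b (Polynomial.C (T k (n - 1) j))
  rwa [iota0_C, iota1_C, incl_T k (n - 1) n j (Nat.sub_le n 1) (by omega),
    shj_T k (n - 1) n j (by omega) (by omega)] at hmem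

theorem bal_chain (n a b : ℕ) (hb : b + 1 < n) (u v : H k n) :
    (u * chain k n a b) ⊗ₜ[k] v - u ⊗ₜ[k] (chain k n (a + 1) (b + 1) * v) ∈ bal k n := by
  obtain ⟨d, hd⟩ : ∃ d, b - a = d := ⟨_, rfl⟩
  induction d generalizing a u with
  | zero =>
      rw [chain_stop k n a b (by omega), chain_stop k n (a + 1) (b + 1) (by omega),
        mul_one, one_mul, sub_self]
      exact Submodule.zero_mem _
  | succ d ih =>
      have hab : a < b := by omega
      rw [chain_cons k n a b hab, chain_cons k n (a + 1) (b + 1) (by omega)]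
      have h1 := ih (a + 1) (u * T k n a) (by omega)
      have h2 := bal_T k n a (by omega) u (chain k n (a + 1 + 1) (b + 1) * v)
      have := Submodule.add_mem _ h1 h2
      rw [sub_add_sub_cancel] at this
      rw [← mul_assoc]
      rwa [← mul_assoc] at this

theorem X_cross_left (n r i : ℕ) (hr : r < i) (hi : i < n) :
    X k n i * chain k n r (n - 1) =
      chain k n r (n - 1) * X k n (i - 1) - chain k n r (i - 1) * chain k n i (n - 1) := by
  have e1 : chain k n (i - 1) (n - 1) = T k n (i - 1) * chain k n i (n - 1) := by
    have h := chain_cons k n (i - 1) (n - 1) (by omega)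
    rwa [show i - 1 + 1 = i from by omega] at h
  have hsplit : chain k n r (n - 1) =
      chain k n r (i - 1) * (T k n (i - 1) * chain k n i (n - 1)) := by
    rw [← e1, ← chain_split k n r (i - 1) (n - 1) (by omega) (by omega)]
  have hc1 : X k n i * chain k n r (i - 1) = chain k n r (i - 1) * X k n i :=
    X_comm_chain k n i r (i - 1) fun j h1 h2 => ⟨by omega, by omega⟩
  have hXT : X k n i * T k n (i - 1) = T k n (i - 1) * X k n (i - 1) - 1 := by
    have h := TX k n (i - 1) (by omega)
    rw [show i - 1 + 1 = i from by omega] at h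
    rw [← h]; abel
  have hc2 : X k n (i - 1) * chain k n i (n - 1) = chain k n i (n - 1) * X k n (i - 1) :=
    X_comm_chain k n (i - 1) i (n - 1) fun j h1 h2 => ⟨by omega, by omega⟩
  have e2 : chain k n r (i - 1) * T k n (i - 1) = chain k n r i := by
    have h := chain_snoc k n r (i - 1) (by omega)
    rw [show i - 1 + 1 = i from by omega] at h
    exact h.symm
  have e3 : chain k n r i * chain k n i (n - 1) = chain k n r (n - 1) :=
    (chain_split k n r i (n - 1) (by omega) (by omega)).symm
  calc X k n i * chain k n r (n - 1)
      = (X k n i * chain k n r (i - 1)) * T k n (i - 1) * chain k n i (n - 1) := by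
        rw [hsplit]; noncomm_ring
    _ = chain k n r (i - 1) * X k n i * T k n (i - 1) * chain k n i (n - 1) := by rw [hc1]
    _ = chain k n r (i - 1) * (X k n i * T k n (i - 1)) * chain k n i (n - 1) := by
        noncomm_ring
    _ = (chain k n r (i - 1) * T k n (i - 1)) * (X k n (i - 1) * chain k n i (n - 1))
          - chain k n r (i - 1) * chain k n i (n - 1) := by
        rw [hXT]; noncomm_ring
    _ = (chain k n r i * chain k n i (n - 1)) * X k n (i - 1)
          - chain k n r (i - 1) * chain k n i (n - 1) := by
        rw [hc2, e2]; noncomm_ring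
    _ = chain k n r (n - 1) * X k n (i - 1) - chain k n r (i - 1) * chain k n i (n - 1) := by
        rw [e3]

theorem X_cross_right (n r i : ℕ) (hr : i < r) (hrn : r < n) :
    chain k n 0 r * X k n i =
      X k n (i + 1) * chain k n 0 r + chain k n 0 i * chain k n (i + 1) r := by
  have hsplit : chain k n 0 r = chain k n 0 i * (T k n i * chain k n (i + 1) r) := by
    rw [← chain_cons k n i r hr, ← chain_split k n 0 i r (by omega) (by omega)]
  have hc1 : X k n i * chain k n (i + 1) r = chain k n (i + 1) r * X k n i :=
    X_comm_chain k n i (i + 1) r fun j h1 h2 => ⟨by omega, by omega⟩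
  have hTX : T k n i * X k n i = X k n (i + 1) * T k n i + 1 := by
    have h := TX k n i (by omega)
    rw [← h]; abel
  have hc2 : X k n (i + 1) * chain k n 0 i = chain k n 0 i * X k n (i + 1) :=
    X_comm_chain k n (i + 1) 0 i fun j h1 h2 => ⟨by omega, by omega⟩
  calc chain k n 0 r * X k n i
      = (chain k n 0 i * T k n i) * (chain k n (i + 1) r * X k n i) := by
        rw [hsplit]; noncomm_ring
    _ = (chain k n 0 i * T k n i) * (X k n i * chain k n (i + 1) r) := by rw [hc1]
    _ = chain k n 0 i * (T k n i * X k n i) * chain k n (i + 1) r := by noncomm_ring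
    _ = (chain k n 0 i * X k n (i + 1)) * (T k n i * chain k n (i + 1) r)
          + chain k n 0 i * chain k n (i + 1) r := by
        rw [hTX]; noncomm_ring
    _ = (X k n (i + 1) * chain k n 0 i) * (T k n i * chain k n (i + 1) r)
          + chain k n 0 i * chain k n (i + 1) r := by rw [hc2]
    _ = X k n (i + 1) * chain k n 0 r + chain k n 0 i * chain k n (i + 1) r := by
        rw [hsplit]; noncomm_ring

theorem x_chain_up (n a b : ℕ) (hab : a ≤ b) (hb : b < n) :
    X k n a * chain k n a b = chain k n a b * X k n b
      + ∑ s ∈ Finset.Ico a b, chain k n a s * chain k n (s + 1) b := by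
  obtain ⟨d, hd⟩ : ∃ d, b - a = d := ⟨_, rfl⟩
  induction d generalizing a with
  | zero =>
      have hone : a = b := by omega
      subst hone
      simp [chain_stop k n a a le_rfl]
  | succ d ih =>
      have hab' : a < b := by omega
      have hXa : X k n a * T k n a = T k n a * X k n (a + 1) + 1 := by
        have h := XT k n a (by omega)
        rw [← h]; abel
      have ihr := ih (a + 1) (by omega) (by omega)
      have hsum : T k n a * (∑ s ∈ Finset.Ico (a + 1) b,
            chain k n (a + 1) s * chain k n (s + 1) b)
          = ∑ s ∈ Finset.Ico (a + 1) b, chain k n a s * chain k n (s + 1) b := by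
        rw [Finset.mul_sum]
        refine Finset.sum_congr rfl fun s hs => ?_
        have hs' := Finset.mem_Ico.mp hs
        rw [← mul_assoc, ← chain_cons k n a s (by omega)]
      calc X k n a * chain k n a b
          = (X k n a * T k n a) * chain k n (a + 1) b := by
            rw [chain_cons k n a b hab', ← mul_assoc]
        _ = T k n a * (X k n (a + 1) * chain k n (a + 1) b) + chain k n (a + 1) b := by
            rw [hXa]; noncomm_ring
        _ = T k n a * (chain k n (a + 1) b * X k n b
              + ∑ s ∈ Finset.Ico (a + 1) b, chain k n (a + 1) s * chain k n (s + 1) b)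
              + chain k n (a + 1) b := by rw [ihr]
        _ = (T k n a * chain k n (a + 1) b) * X k n b
              + (chain k n a a * chain k n (a + 1) b
                + ∑ s ∈ Finset.Ico (a + 1) b, chain k n a s * chain k n (s + 1) b) := by
            rw [mul_add, hsum, chain_stop k n a a le_rfl, one_mul, ← mul_assoc]
            abel
        _ = chain k n a b * X k n b
              + ∑ s ∈ Finset.Ico a b, chain k n a s * chain k n (s + 1) b := by
            rw [← chain_cons k n a b hab', Finset.sum_eq_sum_Ico_succ_bot hab']

theorem x_chain_down (n b : ℕ) (hb : b < n) :
    chain k n 0 b * X k n b = X k n 0 * chain k n 0 b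
      - ∑ s ∈ Finset.Ico 0 b, chain k n 0 s * chain k n (s + 1) b := by
  induction b with
  | zero => simp [chain_stop k n 0 0 le_rfl]
  | succ b ih =>
      have ihb := ih (by omega)
      have hTb : T k n b * X k n (b + 1) = X k n b * T k n b - 1 := by
        have h := XT k n b (by omega)
        rw [← h]; abel
      have hsum : (∑ s ∈ Finset.Ico 0 b, chain k n 0 s * chain k n (s + 1) b) * T k n b
          = ∑ s ∈ Finset.Ico 0 b, chain k n 0 s * chain k n (s + 1) (b + 1) := by
        rw [Finset.sum_mul]
        refine Finset.sum_congr rfl fun s hs => ?_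
        have hs' := Finset.mem_Ico.mp hs
        rw [mul_assoc, ← chain_snoc k n (s + 1) b (by omega)]
      calc chain k n 0 (b + 1) * X k n (b + 1)
          = chain k n 0 b * (T k n b * X k n (b + 1)) := by
            rw [chain_snoc k n 0 b (by omega), mul_assoc]
        _ = (chain k n 0 b * X k n b) * T k n b - chain k n 0 b := by
            rw [hTb]; noncomm_ring
        _ = (X k n 0 * chain k n 0 b
              - ∑ s ∈ Finset.Ico 0 b, chain k n 0 s * chain k n (s + 1) b) * T k n b
              - chain k n 0 b := by rw [ihb]
        _ = X k n 0 * chain k n 0 (b + 1)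
              - ((∑ s ∈ Finset.Ico 0 b, chain k n 0 s * chain k n (s + 1) (b + 1))
                + chain k n 0 b * chain k n (b + 1) (b + 1)) := by
            rw [sub_mul, mul_assoc, ← chain_snoc k n 0 b (by omega), hsum,
              chain_stop k n (b + 1) (b + 1) le_rfl, mul_one, sub_sub]
        _ = X k n 0 * chain k n 0 (b + 1)
              - ∑ s ∈ Finset.Ico 0 (b + 1), chain k n 0 s * chain k n (s + 1) (b + 1) := by
            rw [Finset.sum_Ico_succ_top (Nat.zero_le b)]

theorem term_lt (n r i : ℕ) (hr : r < i) (hi : i < n) :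
    (X k n i * chain k n r (n - 1)) ⊗ₜ[k] chain k n 0 r
      - chain k n r (n - 1) ⊗ₜ[k] (chain k n 0 r * X k n i)
    = ((chain k n r (n - 1) * X k n (i - 1)) ⊗ₜ[k] chain k n 0 r
        - chain k n r (n - 1) ⊗ₜ[k] (X k n i * chain k n 0 r))
      - (chain k n i (n - 1) * chain k n r (i - 1)) ⊗ₜ[k] chain k n 0 r := by
  rw [X_cross_left k n r i hr hi, chain_chain_comm k n r (i - 1) i (n - 1) (by omega),
    ← X_comm_chain k n i 0 r (fun j h1 h2 => ⟨by omega, by omega⟩),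
    TensorProduct.sub_tmul]
  abel

theorem term_gt (n r i : ℕ) (hr : i < r) (hrn : r < n) :
    (X k n i * chain k n r (n - 1)) ⊗ₜ[k] chain k n 0 r
      - chain k n r (n - 1) ⊗ₜ[k] (chain k n 0 r * X k n i)
    = ((chain k n r (n - 1) * X k n i) ⊗ₜ[k] chain k n 0 r
        - chain k n r (n - 1) ⊗ₜ[k] (X k n (i + 1) * chain k n 0 r))
      - chain k n r (n - 1) ⊗ₜ[k] (chain k n (i + 1) r * chain k n 0 i) := by
  rw [X_cross_right k n r i hr hrn,
    X_comm_chain k n i r (n - 1) (fun j h1 h2 => ⟨by omega, by omega⟩),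
    chain_chain_comm k n 0 i (i + 1) r (by omega),
    TensorProduct.tmul_add]
  abel

theorem term_eq (n i : ℕ) (hi : i < n) :
    (X k n i * chain k n i (n - 1)) ⊗ₜ[k] chain k n 0 i
      - chain k n i (n - 1) ⊗ₜ[k] (chain k n 0 i * X k n i)
    = ((chain k n i (n - 1) * X k n (n - 1)) ⊗ₜ[k] chain k n 0 i
        - chain k n i (n - 1) ⊗ₜ[k] (X k n 0 * chain k n 0 i))
      + (∑ s ∈ Finset.Ico i (n - 1),
          (chain k n (s + 1) (n - 1) * chain k n i s) ⊗ₜ[k] chain k n 0 i)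
      + (∑ s ∈ Finset.Ico 0 i,
          chain k n i (n - 1) ⊗ₜ[k] (chain k n (s + 1) i * chain k n 0 s)) := by
  rw [x_chain_up k n i (n - 1) (by omega) (by omega), x_chain_down k n i hi]
  rw [TensorProduct.add_tmul, TensorProduct.sum_tmul, TensorProduct.tmul_sub,
    TensorProduct.tmul_sum]
  rw [show (∑ s ∈ Finset.Ico i (n - 1),
        (chain k n i s * chain k n (s + 1) (n - 1)) ⊗ₜ[k] chain k n 0 i)
      = ∑ s ∈ Finset.Ico i (n - 1),
        (chain k n (s + 1) (n - 1) * chain k n i s) ⊗ₜ[k] chain k n 0 i from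
    Finset.sum_congr rfl fun s hs => by
      rw [chain_chain_comm k n i s (s + 1) (n - 1) (by omega)]]
  rw [show (∑ s ∈ Finset.Ico 0 i,
        chain k n i (n - 1) ⊗ₜ[k] (chain k n 0 s * chain k n (s + 1) i))
      = ∑ s ∈ Finset.Ico 0 i,
        chain k n i (n - 1) ⊗ₜ[k] (chain k n (s + 1) i * chain k n 0 s) from
    Finset.sum_congr rfl fun s hs => by
      rw [chain_chain_comm k n 0 s (s + 1) i (by omega)]]
  abel

end Aux

set_option maxHeartbeats 1600000 in
/-- `x_i · Δ_n = Δ_n · x_i` in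
`H_n ι_0 ⊗_{H_{n−1}[y]} ι_1 H_n` (realized as the quotient of `H_n ⊗_k H_n` by the
balancing submodule `bal`), for each `1 ≤ i ≤ n` (0-based: `i < n`). -/
theorem x_delta_comm (k : Type) [Field k] (n i : ℕ) (hi : i < n) :
    (∑ r ∈ Finset.range n, (X k n i * chain k n r (n-1)) ⊗ₜ[k] chain k n 0 r)
      - (∑ r ∈ Finset.range n, chain k n r (n-1) ⊗ₜ[k] (chain k n 0 r * X k n i))
      ∈ bal k n := by
  -- the five groups of elements
  have hg1 : (∑ r ∈ Finset.Ico 0 i,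
      ((chain k n r (n - 1) * X k n (i - 1)) ⊗ₜ[k] chain k n 0 r
        - chain k n r (n - 1) ⊗ₜ[k] (X k n i * chain k n 0 r))) ∈ bal k n := by
    refine Submodule.sum_mem _ fun r hr => ?_
    have hr' := (Finset.mem_Ico.mp hr).2
    have h := bal_X k n (i - 1) (by omega) (chain k n r (n - 1)) (chain k n 0 r)
    rwa [show i - 1 + 1 = i from by omega] at h
  have hg2 : ((chain k n i (n - 1) * X k n (n - 1)) ⊗ₜ[k] chain k n 0 i
      - chain k n i (n - 1) ⊗ₜ[k] (X k n 0 * chain k n 0 i)) ∈ bal k n :=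
    bal_Xlast k n (chain k n i (n - 1)) (chain k n 0 i)
  have hg3 : (∑ r ∈ Finset.Ico (i + 1) n,
      ((chain k n r (n - 1) * X k n i) ⊗ₜ[k] chain k n 0 r
        - chain k n r (n - 1) ⊗ₜ[k] (X k n (i + 1) * chain k n 0 r))) ∈ bal k n := by
    refine Submodule.sum_mem _ fun r hr => ?_
    have hr' := Finset.mem_Ico.mp hr
    exact bal_X k n i (by omega) (chain k n r (n - 1)) (chain k n 0 r)
  have hBA : ((∑ r ∈ Finset.Ico 0 i,
        chain k n i (n - 1) ⊗ₜ[k] (chain k n (r + 1) i * chain k n 0 r))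
      - ∑ r ∈ Finset.Ico 0 i,
        (chain k n i (n - 1) * chain k n r (i - 1)) ⊗ₜ[k] chain k n 0 r) ∈ bal k n := by
    rw [← Finset.sum_sub_distrib]
    refine Submodule.sum_mem _ fun r hr => ?_
    have hr' := (Finset.mem_Ico.mp hr).2
    have h := bal_chain k n r (i - 1) (by omega) (chain k n i (n - 1)) (chain k n 0 r)
    rw [show i - 1 + 1 = i from by omega] at h
    have h' := Submodule.neg_mem _ h
    rwa [neg_sub] at h'
  have hPQ : ((∑ s ∈ Finset.Ico i (n - 1),
        (chain k n (s + 1) (n - 1) * chain k n i s) ⊗ₜ[k] chain k n 0 i)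
      - ∑ r ∈ Finset.Ico (i + 1) n,
        chain k n r (n - 1) ⊗ₜ[k] (chain k n (i + 1) r * chain k n 0 i)) ∈ bal k n := by
    have hre : (∑ r ∈ Finset.Ico (i + 1) n,
          chain k n r (n - 1) ⊗ₜ[k] (chain k n (i + 1) r * chain k n 0 i))
        = ∑ s ∈ Finset.Ico i (n - 1),
          chain k n (s + 1) (n - 1) ⊗ₜ[k] (chain k n (i + 1) (s + 1) * chain k n 0 i) := by
      rw [Finset.sum_Ico_eq_sum_range, Finset.sum_Ico_eq_sum_range,
        show n - (i + 1) = n - 1 - i from by omega]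
      refine Finset.sum_congr rfl fun j hj => ?_
      rw [show i + 1 + j = i + j + 1 from by omega]
    rw [hre, ← Finset.sum_sub_distrib]
    refine Submodule.sum_mem _ fun s hs => ?_
    have hs' := Finset.mem_Ico.mp hs
    exact bal_chain k n i s (by omega) (chain k n (s + 1) (n - 1)) (chain k n 0 i)
  have total := Submodule.add_mem _ (Submodule.add_mem _
    (Submodule.add_mem _ (Submodule.add_mem _ hg1 hg2) hg3) hBA) hPQ
  have heq : (∑ r ∈ Finset.range n,
        (X k n i * chain k n r (n - 1)) ⊗ₜ[k] chain k n 0 r)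
      - (∑ r ∈ Finset.range n,
        chain k n r (n - 1) ⊗ₜ[k] (chain k n 0 r * X k n i))
      = (∑ r ∈ Finset.Ico 0 i,
          ((chain k n r (n - 1) * X k n (i - 1)) ⊗ₜ[k] chain k n 0 r
            - chain k n r (n - 1) ⊗ₜ[k] (X k n i * chain k n 0 r))
        + ((chain k n i (n - 1) * X k n (n - 1)) ⊗ₜ[k] chain k n 0 i
            - chain k n i (n - 1) ⊗ₜ[k] (X k n 0 * chain k n 0 i))
        + ∑ r ∈ Finset.Ico (i + 1) n,
          ((chain k n r (n - 1) * X k n i) ⊗ₜ[k] chain k n 0 r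
            - chain k n r (n - 1) ⊗ₜ[k] (X k n (i + 1) * chain k n 0 r))
        + ((∑ r ∈ Finset.Ico 0 i,
            chain k n i (n - 1) ⊗ₜ[k] (chain k n (r + 1) i * chain k n 0 r))
          - ∑ r ∈ Finset.Ico 0 i,
            (chain k n i (n - 1) * chain k n r (i - 1)) ⊗ₜ[k] chain k n 0 r)
        + ((∑ s ∈ Finset.Ico i (n - 1),
            (chain k n (s + 1) (n - 1) * chain k n i s) ⊗ₜ[k] chain k n 0 i)
          - ∑ r ∈ Finset.Ico (i + 1) n,
            chain k n r (n - 1) ⊗ₜ[k] (chain k n (i + 1) r * chain k n 0 i))) := by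
    calc (∑ r ∈ Finset.range n,
          (X k n i * chain k n r (n - 1)) ⊗ₜ[k] chain k n 0 r)
        - (∑ r ∈ Finset.range n,
          chain k n r (n - 1) ⊗ₜ[k] (chain k n 0 r * X k n i))
        = ∑ r ∈ Finset.range n,
            ((X k n i * chain k n r (n - 1)) ⊗ₜ[k] chain k n 0 r
              - chain k n r (n - 1) ⊗ₜ[k] (chain k n 0 r * X k n i)) := by
          rw [Finset.sum_sub_distrib]
      _ = (∑ r ∈ Finset.Ico 0 i,
            ((X k n i * chain k n r (n - 1)) ⊗ₜ[k] chain k n 0 r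
              - chain k n r (n - 1) ⊗ₜ[k] (chain k n 0 r * X k n i)))
          + (((X k n i * chain k n i (n - 1)) ⊗ₜ[k] chain k n 0 i
              - chain k n i (n - 1) ⊗ₜ[k] (chain k n 0 i * X k n i))
            + ∑ r ∈ Finset.Ico (i + 1) n,
            ((X k n i * chain k n r (n - 1)) ⊗ₜ[k] chain k n 0 r
              - chain k n r (n - 1) ⊗ₜ[k] (chain k n 0 r * X k n i))) := by
          rw [Finset.range_eq_Ico,
            ← Finset.sum_Ico_consecutive _ (Nat.zero_le i) hi.le,
            Finset.sum_eq_sum_Ico_succ_bot hi]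
      _ = (∑ r ∈ Finset.Ico 0 i,
            (((chain k n r (n - 1) * X k n (i - 1)) ⊗ₜ[k] chain k n 0 r
              - chain k n r (n - 1) ⊗ₜ[k] (X k n i * chain k n 0 r))
             - (chain k n i (n - 1) * chain k n r (i - 1)) ⊗ₜ[k] chain k n 0 r))
          + ((((chain k n i (n - 1) * X k n (n - 1)) ⊗ₜ[k] chain k n 0 i
              - chain k n i (n - 1) ⊗ₜ[k] (X k n 0 * chain k n 0 i))
            + (∑ s ∈ Finset.Ico i (n - 1),
                (chain k n (s + 1) (n - 1) * chain k n i s) ⊗ₜ[k] chain k n 0 i)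
            + (∑ s ∈ Finset.Ico 0 i,
                chain k n i (n - 1) ⊗ₜ[k] (chain k n (s + 1) i * chain k n 0 s)))
            + ∑ r ∈ Finset.Ico (i + 1) n,
              (((chain k n r (n - 1) * X k n i) ⊗ₜ[k] chain k n 0 r
                - chain k n r (n - 1) ⊗ₜ[k] (X k n (i + 1) * chain k n 0 r))
               - chain k n r (n - 1) ⊗ₜ[k] (chain k n (i + 1) r * chain k n 0 i))) := by
          rw [term_eq k n i hi]
          congr 1
          · exact Finset.sum_congr rfl fun r hr =>
              term_lt k n r i (Finset.mem_Ico.mp hr).2 hi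
          · congr 1
            exact Finset.sum_congr rfl fun r hr =>
              term_gt k n r i (Finset.mem_Ico.mp hr).1 (Finset.mem_Ico.mp hr).2
      _ = _ := by
          simp only [Finset.sum_sub_distrib]
          abel
  rw [heq]
  exact total

end NilHecke
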